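/- Let g : ℤ → ℝ satisfy g(t) ≥ 0 for all t, and let ε ≥ 0 satisfy |g(t+1) − g(t)| ≤ ε·g(t) for all t ∈ ℤ. Let w ≥ 1 be an integer with w·ε < 1, and let a_{−w}, …, a_w be nonnegative reals with Σ_{i=−w}^{w} a_i = 1. Then for all t ∈ ℤ: |Σ_{i=−w}^{w} a_i·g(t + i) − g(t)| ≤ (w·ε/(1 − w·ε))·g(t). -/

import Mathlib

/-- Mean-deviation step in the proof of the paper's Theorem 7: a convex
combination of a nonnegative sequence with relatively bounded first
differences over a window of radius `w` stays within a relative factor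
`w·ε/(1 − w·ε)` of the center value. -/
theorem convex_combination_deviation (g : ℤ → ℝ) (hg : ∀ t, 0 ≤ g t)
    (ε : ℝ) (hε : 0 ≤ ε) (hdiff : ∀ t : ℤ, |g (t + 1) - g t| ≤ ε * g t)
    (w : ℕ) (hw : 1 ≤ w) (hwε : (w : ℝ) * ε < 1)
    (a : ℤ → ℝ) (ha : ∀ i ∈ Finset.Icc (-(w : ℤ)) (w : ℤ), 0 ≤ a i)
    (hsum : ∑ i ∈ Finset.Icc (-(w : ℤ)) (w : ℤ), a i = 1) :
    ∀ t : ℤ,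
      |(∑ i ∈ Finset.Icc (-(w : ℤ)) (w : ℤ), a i * g (t + i)) - g t|
        ≤ ((w : ℝ) * ε / (1 - (w : ℝ) * ε)) * g t := by
  intro t
  set D : ℝ := 1 - (w : ℝ) * ε with hDdef
  have hD : 0 < D := by simp [hDdef]; linarith
  set C : ℝ := (w : ℝ) * ε / D with hCdef
  have hCnn : 0 ≤ C := by
    apply div_nonneg _ hD.le
    positivity
  have hwεnn : 0 ≤ (w : ℝ) * ε := by positivity
  have hwεC : (w : ℝ) * ε ≤ C := by
    rw [hCdef]
    rw [le_div_iff₀ hD]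
    nlinarith
  -- key two-sided pow bound
  have key : ∀ s : ℤ, ∀ k : ℕ,
      (1 - ε) ^ k * g s ≤ g (s + k) ∧ g (s + k) ≤ (1 + ε) ^ k * g s := by
    intro s k
    induction k with
    | zero => simp
    | succ k ih =>
      obtain ⟨hl, hu⟩ := ih
      have hd := hdiff (s + k)
      rw [abs_sub_le_iff] at hd
      have hgs : 0 ≤ g (s + k) := hg _
      have hcast : ((k : ℤ) + 1 : ℤ) = ((k + 1 : ℕ) : ℤ) := by push_cast; ring
      have harr : s + ((k + 1 : ℕ) : ℤ) = (s + k) + 1 := by push_cast; ring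
      rw [harr]
      constructor
      · have : (1 - ε) * g (s + k) ≤ g ((s + k) + 1) := by nlinarith [hd.1, hd.2]
        calc (1 - ε) ^ (k + 1) * g s = (1 - ε) * ((1 - ε) ^ k * g s) := by ring
          _ ≤ (1 - ε) * g (s + k) := by
              apply mul_le_mul_of_nonneg_left hl
              have hε1 : ε < 1 := by
                have : (1 : ℝ) ≤ (w : ℝ) := by exact_mod_cast hw
                nlinarith
              linarith
          _ ≤ g ((s + k) + 1) := this
      · have : g ((s + k) + 1) ≤ (1 + ε) * g (s + k) := by nlinarith [hd.1, hd.2]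
        calc g ((s + k) + 1) ≤ (1 + ε) * g (s + k) := this
          _ ≤ (1 + ε) * ((1 + ε) ^ k * g s) := by
              apply mul_le_mul_of_nonneg_left hu; linarith
          _ = (1 + ε) ^ (k + 1) * g s := by ring
  have hε1 : ε < 1 := by
    have : (1 : ℝ) ≤ (w : ℝ) := by exact_mod_cast hw
    nlinarith
  -- Bernoulli bounds
  have hBern : ∀ k : ℕ, k ≤ w → D ≤ (1 - ε) ^ k := by
    intro k hk
    have h1 : (1 : ℝ) + (k : ℝ) * (-ε) ≤ (1 + (-ε)) ^ k :=
      one_add_mul_le_pow (by linarith) k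
    have h2 : (k : ℝ) ≤ (w : ℝ) := by exact_mod_cast hk
    have : D ≤ 1 + (k : ℝ) * (-ε) := by rw [hDdef]; nlinarith
    calc D ≤ 1 + (k : ℝ) * (-ε) := this
      _ ≤ (1 + (-ε)) ^ k := h1
      _ = (1 - ε) ^ k := by ring_nf
  have hUp : ∀ k : ℕ, k ≤ w → D * (1 + ε) ^ k ≤ 1 := by
    intro k hk
    have h1 : D ≤ (1 - ε) ^ k := hBern k hk
    have h2 : (0 : ℝ) ≤ (1 + ε) ^ k := by positivity
    have h3 : ((1 - ε) * (1 + ε)) ^ k ≤ 1 := by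
      apply pow_le_one₀ <;> nlinarith
    calc D * (1 + ε) ^ k ≤ (1 - ε) ^ k * (1 + ε) ^ k := by nlinarith
      _ = ((1 - ε) * (1 + ε)) ^ k := (mul_pow _ _ _).symm
      _ ≤ 1 := h3
  -- per-index deviation bound
  have hdev : ∀ i ∈ Finset.Icc (-(w : ℤ)) (w : ℤ), |g (t + i) - g t| ≤ C * g t := by
    intro i hi
    rw [Finset.mem_Icc] at hi
    -- establish D * g t ≤ g (t+i) and D * g (t+i) ≤ g t
    have hmain : D * g t ≤ g (t + i) ∧ D * g (t + i) ≤ g t := by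
      rcases le_or_gt 0 i with hi0 | hi0
      · set k : ℕ := i.toNat with hkdef
        have hki : (k : ℤ) = i := Int.toNat_of_nonneg hi0
        have hkw : k ≤ w := by omega
        obtain ⟨hl, hu⟩ := key t k
        rw [hki] at hl hu
        constructor
        · calc D * g t ≤ (1 - ε) ^ k * g t := by
                have := hBern k hkw; nlinarith [hg t]
            _ ≤ g (t + i) := hl
        · have h1 := hUp k hkw
          have h2 : 0 ≤ g t := hg t
          nlinarith
      · set k : ℕ := (-i).toNat with hkdef
        have hki : (k : ℤ) = -i := Int.toNat_of_nonneg (by omega)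
        have hkw : k ≤ w := by omega
        obtain ⟨hl, hu⟩ := key (t + i) k
        have harr : t + i + (k : ℤ) = t := by omega
        rw [harr] at hl hu
        constructor
        · have h1 := hUp k hkw
          have h2 : 0 ≤ g (t + i) := hg _
          nlinarith
        · calc D * g (t + i) ≤ (1 - ε) ^ k * g (t + i) := by
                have := hBern k hkw; nlinarith [hg (t + i)]
            _ ≤ g t := hl
    obtain ⟨h1, h2⟩ := hmain
    rw [abs_sub_le_iff]
    have hgt : 0 ≤ g t := hg t
    have hgi : 0 ≤ g (t + i) := hg _
    constructor
    · -- g (t+i) - g t ≤ C * g t : from D * g(t+i) ≤ g t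
      have : g (t + i) ≤ g t / D := by rw [le_div_iff₀ hD]; linarith
      have hCgt : C * g t = g t / D - g t := by
        field_simp [hCdef, hDdef]; rw [hCdef, div_mul_eq_mul_div, div_mul_cancel₀ _ hD.ne', hDdef]; ring
      rw [hCgt]; linarith
    · -- g t - g (t+i) ≤ C * g t : from D * g t ≤ g (t+i)
      have e : g t - D * g t = (w : ℝ) * ε * g t := by rw [hDdef]; ring
      have h3 : (w : ℝ) * ε * g t ≤ C * g t :=
        mul_le_mul_of_nonneg_right hwεC (hg t)
      linarith
  -- sum it up
  have hrw : (∑ i ∈ Finset.Icc (-(w : ℤ)) (w : ℤ), a i * g (t + i)) - g t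
      = ∑ i ∈ Finset.Icc (-(w : ℤ)) (w : ℤ), a i * (g (t + i) - g t) := by
    simp only [mul_sub]
    rw [Finset.sum_sub_distrib, ← Finset.sum_mul, hsum, one_mul]
  rw [hrw]
  calc |∑ i ∈ Finset.Icc (-(w : ℤ)) (w : ℤ), a i * (g (t + i) - g t)|
      ≤ ∑ i ∈ Finset.Icc (-(w : ℤ)) (w : ℤ), |a i * (g (t + i) - g t)| :=
        Finset.abs_sum_le_sum_abs _ _
    _ ≤ ∑ i ∈ Finset.Icc (-(w : ℤ)) (w : ℤ), a i * (C * g t) := by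
        apply Finset.sum_le_sum
        intro i hi
        rw [abs_mul, abs_of_nonneg (ha i hi)]
        exact mul_le_mul_of_nonneg_left (hdev i hi) (ha i hi)
    _ = C * g t := by rw [← Finset.sum_mul, hsum, one_mul]
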